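/- Let W be a type, S a subset of W, and f, g : W → [0,1]. Then ⨅_{w ∈ S} (f w ⇒ g w) ≤ ((⨅_{w ∈ S} f w) ⇒ (⨅_{w ∈ S} g w)). (This is soundness of the axiom (K_□): □(φ → ψ) → (□φ → □ψ) at any world of any crisp Gödel-Kripke model.) -/

import Mathlib

open unitInterval

instance : Fact ((0:ℝ) ≤ 1) := ⟨zero_le_one⟩

noncomputable instance : CompleteLattice unitInterval := Set.Icc.completeLattice

/-- Gödel implication on the unit interval. -/
noncomputable def gimp (a b : unitInterval) : unitInterval := if a ≤ b then 1 else b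

infixr:60 " ⇒ " => gimp

/-- Gödel negation on the unit interval. -/
noncomputable def gneg (a : unitInterval) : unitInterval := a ⇒ 0

lemma gimp_inf_le (a b : unitInterval) : (a ⇒ b) ⊓ a ≤ b := by
  unfold gimp
  split
  · exact le_trans inf_le_right ‹a ≤ b›
  · exact inf_le_left

theorem soundness_K_box {W : Type*} (S : Set W) (f g : W → unitInterval) :
    (⨅ w ∈ S, (f w ⇒ g w)) ≤ ((⨅ w ∈ S, f w) ⇒ (⨅ w ∈ S, g w)) := by
  have key : (⨅ w ∈ S, (f w ⇒ g w)) ⊓ (⨅ w ∈ S, f w) ≤ ⨅ w ∈ S, g w := by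
    refine le_iInf₂ fun w hw => ?_
    exact le_trans (inf_le_inf (iInf₂_le w hw) (iInf₂_le w hw)) (gimp_inf_le _ _)
  unfold gimp
  split
  · exact unitInterval.le_one _
  · rename_i h
    have hba : (⨅ w ∈ S, g w) < ⨅ w ∈ S, f w := lt_of_not_ge h
    rcases le_total (⨅ w ∈ S, (f w ⇒ g w)) (⨅ w ∈ S, f w) with hle | hge
    · rw [inf_eq_left.mpr hle] at key; exact key
    · exact absurd (le_trans (le_inf hge le_rfl) key) (not_le.mpr hba)
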